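/- Let u ∈ ℂ ∖ Λ. The function x ↦ w(x;u) is odd — i.e., w(−x;u) = −w(x;u) for all x ∈ ℂ with x ∉ Λ — if and only if 2u ∈ Λ (u is a half-period of the lattice). -/

import Mathlib

open scoped Classical

noncomputable section

/-- The rank-2 lattice `Λ = ℤω₁ + ℤω₂ ⊂ ℂ`. -/
def LatticeOf (ω₁ ω₂ : ℂ) : Set ℂ :=
  {z | ∃ m l : ℤ, z = (m : ℂ) * ω₁ + (l : ℂ) * ω₂}

/-- Krichever's function `w(x;u) = σ(u−x) e^{ζ(u)x} / (σ(u)σ(x))`. -/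
def wK (sig zet : ℂ → ℂ) (x u : ℂ) : ℂ :=
  sig (u - x) * Complex.exp (zet u * x) / (sig u * sig x)

open Filter Topology Set Bornology

/-- A holomorphic function with zero derivative on an open preconnected set is constant there. -/
lemma const_of_deriv_zero_aux {U : Set ℂ} (hU : IsOpen U) (hUc : IsPreconnected U) {f : ℂ → ℂ}
    (hf : ∀ z ∈ U, HasDerivAt f 0 z) {z₀ : ℂ} (hz₀ : z₀ ∈ U) : ∀ z ∈ U, f z = f z₀ := by
  have hdiff : DifferentiableOn ℂ f U := fun z hz =>
    ((hf z hz).differentiableAt).differentiableWithinAt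
  have hanal := hdiff.analyticOnNhd hU
  obtain ⟨r, hr, hball⟩ := Metric.isOpen_iff.mp hU z₀ hz₀
  have hba : ∀ x ∈ Metric.ball z₀ r, f x = f z₀ := by
    intro x hx
    refine (convex_ball z₀ r).is_const_of_fderivWithin_eq_zero (𝕜 := ℂ)
      (hdiff.mono hball) (fun y hy => ?_) hx (Metric.mem_ball_self hr)
    rw [fderivWithin_of_isOpen Metric.isOpen_ball hy, ← toSpanSingleton_deriv,
      (hf y (hball hy)).deriv]
    ext
    simp
  have hev : f =ᶠ[𝓝 z₀] fun _ => f z₀ :=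
    Filter.eventuallyEq_of_mem (Metric.ball_mem_nhds z₀ hr) hba
  exact fun z hz =>
    hanal.eqOn_of_preconnected_of_eventuallyEq analyticOnNhd_const hUc hz₀ hev hz

/-- Negation maps the punctured neighborhood of `0` to itself. -/
lemma neg_tendsto_aux : Tendsto (fun z : ℂ => -z) (𝓝[≠] (0:ℂ)) (𝓝[≠] (0:ℂ)) := by
  have h1 : Tendsto (fun z : ℂ => -z) (𝓝 (0:ℂ)) (𝓝 (0:ℂ)) := by
    simpa using (continuous_neg.tendsto (0:ℂ))
  have h2 : Tendsto (fun z : ℂ => -z) (𝓟 {(0:ℂ)}ᶜ) (𝓟 {(0:ℂ)}ᶜ) :=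
    tendsto_principal_principal.mpr (fun z hz => by simpa using hz)
  exact h1.inf h2

/-- `x ↦ w(x;u)` is odd iff `u` is a half-period of the lattice. -/
theorem statement12
    (ω₁ ω₂ : ℂ) (hω : LinearIndependent ℝ ![ω₁, ω₂])
    (sig zet pe : ℂ → ℂ)
    -- `pe = ℘` is the Weierstrass ℘-function of `Λ`: holomorphic off `Λ`,
    -- `Λ`-periodic, with `℘(z) − 1/z² → 0` as `z → 0`.
    (hpe_diff : DifferentiableOn ℂ pe (LatticeOf ω₁ ω₂)ᶜ)
    (hpe_per₁ : ∀ z : ℂ, pe (z + ω₁) = pe z)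
    (hpe_per₂ : ∀ z : ℂ, pe (z + ω₂) = pe z)
    (hpe_zero : Filter.Tendsto (fun z : ℂ => pe z - 1 / z ^ 2)
      (nhdsWithin 0 {(0:ℂ)}ᶜ) (nhds 0))
    -- `zet = ζ` is the Weierstrass zeta function: `ζ′ = −℘`, `ζ(z) − 1/z → 0`.
    (hzet_deriv : ∀ z ∉ LatticeOf ω₁ ω₂, HasDerivAt zet (-pe z) z)
    (hzet_zero : Filter.Tendsto (fun z : ℂ => zet z - 1 / z)
      (nhdsWithin 0 {(0:ℂ)}ᶜ) (nhds 0))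
    -- `sig = σ` is the Weierstrass sigma function: entire, vanishing exactly on
    -- `Λ`, with `σ′/σ = ζ` off `Λ` and `σ(z)/z → 1` as `z → 0`.
    (hsig_diff : Differentiable ℂ sig)
    (hsig_zero : ∀ z : ℂ, sig z = 0 ↔ z ∈ LatticeOf ω₁ ω₂)
    (hsig_deriv : ∀ z ∉ LatticeOf ω₁ ω₂, HasDerivAt sig (zet z * sig z) z)
    (hsig_one : Filter.Tendsto (fun z : ℂ => sig z / z)
      (nhdsWithin 0 {(0:ℂ)}ᶜ) (nhds 1))
    (u : ℂ) (hu : u ∉ LatticeOf ω₁ ω₂) :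
    (∀ x : ℂ, x ∉ LatticeOf ω₁ ω₂ → wK sig zet (-x) u = -wK sig zet x u) ↔
      2 * u ∈ LatticeOf ω₁ ω₂ := by
  set Λ := LatticeOf ω₁ ω₂ with hΛdef
  -- basic subgroup facts
  have h0 : (0:ℂ) ∈ Λ := ⟨0, 0, by simp⟩
  have hneg : ∀ z ∈ Λ, -z ∈ Λ := by
    rintro z ⟨m, l, rfl⟩; exact ⟨-m, -l, by push_cast; ring⟩
  have haddmem : ∀ z w : ℂ, z ∈ Λ → w ∈ Λ → z + w ∈ Λ := by
    rintro z w ⟨m, l, rfl⟩ ⟨m', l', rfl⟩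
    exact ⟨m + m', l + l', by push_cast; ring⟩
  have hsig_ne : ∀ z ∉ Λ, sig z ≠ 0 := fun z hz h => hz ((hsig_zero z).mp h)
  have hmu : -u ∉ Λ := fun h => hu (by simpa using hneg _ h)
  constructor
  · -- odd ⇒ half-period : just plug in `x = u`.
    intro hodd
    have h := hodd u hu
    have hw0 : wK sig zet u u = 0 := by
      simp [wK, sub_self, (hsig_zero 0).mpr h0]
    rw [hw0, neg_zero] at h
    have hd : sig (u - -u) * Complex.exp (zet u * -u) = 0 ∨ sig u * sig (-u) = 0 := by
      simpa [wK, div_eq_zero_iff] using h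
    rcases hd with hd | hd
    · rcases mul_eq_zero.mp hd with hd | hd
      · have : u - -u ∈ Λ := (hsig_zero _).mp hd
        have h2 : u - -u = 2 * u := by ring
        rwa [h2] at this
      · exact absurd hd (Complex.exp_ne_zero _)
    · rcases mul_eq_zero.mp hd with hd | hd
      · exact absurd hd (hsig_ne u hu)
      · exact absurd hd (hsig_ne (-u) hmu)
  · -- half-period ⇒ odd : the hard direction
    intro h2u
    -- identify Λ with the ℤ-span of a basis
    have hcard : Fintype.card (Fin 2) = Module.finrank ℝ ℂ := by
      simp [Complex.finrank_real_complex]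
    set b : Module.Basis (Fin 2) ℝ ℂ := basisOfLinearIndependentOfCardEqFinrank hω hcard with hbdef
    have hb : ⇑b = ![ω₁, ω₂] := coe_basisOfLinearIndependentOfCardEqFinrank hω hcard
    have hΛspan : Λ = ((Submodule.span ℤ (Set.range ⇑b) : Submodule ℤ ℂ) : Set ℂ) := by
      ext z
      rw [SetLike.mem_coe, hb, Submodule.mem_span_range_iff_exists_fun]
      constructor
      · rintro ⟨m, l, rfl⟩
        exact ⟨![m, l], by simp [Fin.sum_univ_two, zsmul_eq_mul]⟩
      · rintro ⟨c, rfl⟩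
        exact ⟨c 0, c 1, by simp [Fin.sum_univ_two, zsmul_eq_mul]⟩
    -- Λ is closed
    have hclosed : IsClosed (Λ : Set ℂ) := by
      rw [hΛspan, ← Submodule.coe_toAddSubgroup]
      exact AddSubgroup.isClosed_of_discrete
    have hopenC : IsOpen Λᶜ := hclosed.isOpen_compl
    -- Λ is countable
    have hcount : Λ.Countable := by
      have : Λ = Set.range (fun p : ℤ × ℤ => (p.1 : ℂ) * ω₁ + (p.2 : ℂ) * ω₂) := by
        ext z
        constructor
        · rintro ⟨m, l, h⟩; exact ⟨(m, l), h.symm⟩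
        · rintro ⟨⟨m, l⟩, h⟩; exact ⟨m, l, h.symm⟩
      rw [this]; exact Set.countable_range _
    have hpreconn : IsPreconnected Λᶜ := by
      refine (hcount.isConnected_compl_of_one_lt_rank ?_).isPreconnected
      rw [Complex.rank_real_complex]; exact Cardinal.one_lt_two
    -- discreteness of Λ
    have hdisc : ∀ x ∈ Λ, 𝓝[≠] x ⊓ 𝓟 Λ = ⊥ := by
      rw [hΛspan]
      exact discreteTopology_subtype_iff.mp
        (inferInstanceAs (DiscreteTopology (Submodule.span ℤ (Set.range ⇑b))))
    have hev0 : ∀ᶠ z in 𝓝[≠] (0:ℂ), z ∉ Λ := by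
      have h := hdisc 0 h0
      exact Filter.eventually_mem_set.mpr (Filter.inf_principal_eq_bot.mp h)
    -- Λ-periodicity of pe
    have hpe1 : ∀ m : ℤ, ∀ z : ℂ, pe (z + (m : ℂ) * ω₁) = pe z := by
      intro m
      induction m using Int.induction_on with
      | zero => simp
      | succ k ih =>
        intro z
        have e : z + (((k : ℤ) + 1 : ℤ) : ℂ) * ω₁ = (z + ((k : ℤ) : ℂ) * ω₁) + ω₁ := by
          push_cast; ring
        rw [e, hpe_per₁, ih]
      | pred k ih =>
        intro z
        have e : z + ((-(k : ℤ) - 1 : ℤ) : ℂ) * ω₁ + ω₁ = z + ((-(k : ℤ) : ℤ) : ℂ) * ω₁ := by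
          push_cast; ring
        have := hpe_per₁ (z + (-(k : ℤ) - 1 : ℤ) * ω₁)
        rw [e] at this
        rw [← this, ih]
    have hpe2 : ∀ m : ℤ, ∀ z : ℂ, pe (z + (m : ℂ) * ω₂) = pe z := by
      intro m
      induction m using Int.induction_on with
      | zero => simp
      | succ k ih =>
        intro z
        have e : z + (((k : ℤ) + 1 : ℤ) : ℂ) * ω₂ = (z + ((k : ℤ) : ℂ) * ω₂) + ω₂ := by
          push_cast; ring
        rw [e, hpe_per₂, ih]
      | pred k ih =>
        intro z
        have e : z + ((-(k : ℤ) - 1 : ℤ) : ℂ) * ω₂ + ω₂ = z + ((-(k : ℤ) : ℤ) : ℂ) * ω₂ := by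
          push_cast; ring
        have := hpe_per₂ (z + (-(k : ℤ) - 1 : ℤ) * ω₂)
        rw [e] at this
        rw [← this, ih]
    have hpe_perΛ : ∀ w ∈ Λ, ∀ z : ℂ, pe (z + w) = pe z := by
      rintro w ⟨m, l, rfl⟩ z
      have e : z + ((m : ℂ) * ω₁ + (l : ℂ) * ω₂) = (z + (m : ℂ) * ω₁) + (l : ℂ) * ω₂ := by ring
      rw [e, hpe2, hpe1]
    -- pe is even off Λ (via Liouville)
    set E : ℂ → ℂ := fun z => if z ∈ Λ then 0 else pe z - pe (-z) with hEdef
    have hE_on : ∀ z ∉ Λ, E z = pe z - pe (-z) := fun z hz => by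
      simp only [hEdef]; exact if_neg hz
    have hE_per : ∀ w ∈ Λ, ∀ z : ℂ, E (z + w) = E z := by
      intro w hw z
      simp only [hEdef]
      by_cases hz : z ∈ Λ
      · rw [if_pos (haddmem _ _ hz hw), if_pos hz]
      · have hzw : z + w ∉ Λ := fun h => hz (by
          have := haddmem _ _ h (hneg _ hw); simpa using this)
        rw [if_neg hzw, if_neg hz, hpe_perΛ w hw z]
        have : -(z + w) = -z + -w := by ring
        rw [this, hpe_perΛ (-w) (hneg _ hw) (-z)]
    have hE_diffOn : DifferentiableOn ℂ E Λᶜ := by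
      have hd2 : DifferentiableOn ℂ (fun z => pe z - pe (-z)) Λᶜ := by
        refine hpe_diff.sub ?_
        refine hpe_diff.comp (differentiable_neg.differentiableOn) ?_
        intro z hz
        exact fun h => hz (by simpa using hneg _ h)
      exact hd2.congr (fun z hz => hE_on z hz)
    have hE_cont0 : ContinuousAt E 0 := by
      rw [← continuousWithinAt_compl_self]
      have hE00 : E 0 = 0 := by simp only [hEdef]; exact if_pos h0
      unfold ContinuousWithinAt
      rw [hE00]
      have hsum : Tendsto (fun z : ℂ => (pe z - 1 / z ^ 2) - (pe (-z) - 1 / (-z) ^ 2))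
          (𝓝[≠] (0:ℂ)) (𝓝 0) := by
        have := hpe_zero.sub (hpe_zero.comp neg_tendsto_aux)
        simpa using this
      refine hsum.congr' ?_
      filter_upwards [hev0] with z hz
      rw [hE_on z hz]
      have : (-z) ^ 2 = z ^ 2 := by ring
      rw [this]; ring
    have hE_diff0 : DifferentiableAt ℂ E 0 := by
      have hsmem : (Λ \ {0})ᶜ ∈ 𝓝 (0:ℂ) := by
        have h1 : ∀ᶠ z in 𝓝 (0:ℂ), z ≠ 0 → z ∉ Λ := by
          have h2 := eventually_nhdsWithin_iff.mp hev0
          filter_upwards [h2] with z hz hz0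
          exact hz hz0
        filter_upwards [h1] with z hz
        exact fun hmem => hz hmem.2 hmem.1
      have hsd : (Λ \ {0})ᶜ \ {0} = Λᶜ := by
        ext z
        simp only [Set.mem_diff, Set.mem_compl_iff, Set.mem_singleton_iff]
        constructor
        · rintro ⟨hz1, hz2⟩ hzΛ; exact hz1 ⟨hzΛ, hz2⟩
        · intro hz
          have hz0 : z ≠ 0 := fun h => hz (h ▸ h0)
          exact ⟨fun hmem => hz hmem.1, hz0⟩
      have := (Complex.differentiableOn_compl_singleton_and_continuousAt_iff hsmem).mp
        ⟨by rw [hsd]; exact hE_diffOn, hE_cont0⟩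
      exact this.differentiableAt hsmem
    have hE_diff : Differentiable ℂ E := by
      intro z
      by_cases hz : z ∈ Λ
      · have hfe : E = fun y => E (y - z) := by
          funext y
          have := hE_per z hz (y - z)
          rw [show y - z + z = y by ring] at this
          exact this
        rw [hfe]
        have h1 : DifferentiableAt ℂ (fun y : ℂ => y - z) z :=
          (differentiableAt_id.sub_const z)
        have h2 : DifferentiableAt ℂ E ((fun y : ℂ => y - z) z) := by
          simpa using hE_diff0
        have h3 : DifferentiableAt ℂ (E ∘ fun y : ℂ => y - z) z :=
          DifferentiableAt.comp z h2 h1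
        exact h3
      · exact (hE_diffOn z hz).differentiableAt (hopenC.mem_nhds hz)
    have hE_bounded : IsBounded (Set.range E) := by
      have hfract : ∀ z : ℂ, E z = E (ZSpan.fract b z) := by
        intro z
        have hmem : z - ZSpan.fract b z ∈ Λ := by
          rw [hΛspan, ZSpan.fract_apply, sub_sub_cancel]
          exact (ZSpan.floor b z).2
        have := hE_per _ hmem (ZSpan.fract b z)
        rw [show ZSpan.fract b z + (z - ZSpan.fract b z) = z by ring] at this
        exact this
      have hsub : Set.range E ⊆ E '' (closure (ZSpan.fundamentalDomain b)) := by
        rintro _ ⟨z, rfl⟩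
        exact ⟨ZSpan.fract b z, subset_closure (ZSpan.fract_mem_fundamentalDomain b z),
          (hfract z).symm⟩
      exact (((ZSpan.fundamentalDomain_isBounded b).isCompact_closure).image
        hE_diff.continuous).isBounded.subset hsub
    have hpe_even : ∀ z ∉ Λ, pe (-z) = pe z := by
      intro z hz
      have h := hE_diff.apply_eq_apply_of_bounded hE_bounded z 0
      have hE00 : E 0 = 0 := by simp only [hEdef]; exact if_pos h0
      rw [hE_on z hz, hE00] at h
      exact (sub_eq_zero.mp h).symm
    -- zeta is odd
    have hmemC : ∀ z : ℂ, z ∉ Λ → -z ∉ Λ := fun z hz h => hz (by simpa using hneg _ h)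
    have hg_deriv : ∀ z ∈ Λᶜ, HasDerivAt (fun y => zet y + zet (-y)) 0 z := by
      intro z hz
      have hz' : -z ∉ Λ := hmemC z hz
      have h2 : HasDerivAt (fun y : ℂ => zet (-y)) (-pe (-z) * -1) z := by
        have := (hzet_deriv (-z) hz').comp z (hasDerivAt_neg z)
        exact this
      have h := (hzet_deriv z hz).add h2
      convert h using 1
      · rfl
      · rfl
      · rfl
      rw [hpe_even z hz]; ring
    have hgconst := const_of_deriv_zero_aux hopenC hpreconn hg_deriv (Set.mem_compl hu)
    have hc0 : zet u + zet (-u) = 0 := by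
      have ht1 : Tendsto (fun z : ℂ => zet z + zet (-z)) (𝓝[≠] (0:ℂ)) (𝓝 0) := by
        have hsum := hzet_zero.add (hzet_zero.comp neg_tendsto_aux)
        rw [add_zero] at hsum
        refine hsum.congr fun z => ?_
        show (zet z - 1/z) + (zet (-z) - 1/(-z)) = zet z + zet (-z)
        rw [div_neg]; ring
      have ht2 : Tendsto (fun z : ℂ => zet z + zet (-z)) (𝓝[≠] (0:ℂ))
          (𝓝 (zet u + zet (-u))) := by
        refine Filter.Tendsto.congr' ?_ tendsto_const_nhds
        filter_upwards [hev0] with z hz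
        exact ((hgconst z hz : zet z + zet (-z) = zet u + zet (-u))).symm
      exact tendsto_nhds_unique ht2 ht1
    have hzet_odd : ∀ z ∉ Λ, zet (-z) = -zet z := by
      intro z hz
      have h : zet z + zet (-z) = zet u + zet (-u) := hgconst z hz
      rw [hc0] at h
      linear_combination h
    -- sigma is odd
    have hq_deriv : ∀ z ∈ Λᶜ, HasDerivAt (fun y => sig (-y) / sig y) 0 z := by
      intro z hz
      have hz' : -z ∉ Λ := hmemC z hz
      have hn : HasDerivAt (fun y : ℂ => sig (-y)) (zet (-z) * sig (-z) * -1) z := by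
        have := (hsig_deriv (-z) hz').comp z (hasDerivAt_neg z)
        exact this
      have h := hn.div (hsig_deriv z hz) (hsig_ne z hz)
      convert h using 1
      · rfl
      · rfl
      · rfl
      rw [hzet_odd z hz]; ring
    have hqconst := const_of_deriv_zero_aux hopenC hpreconn hq_deriv (Set.mem_compl hu)
    have hqm1 : sig (-u) / sig u = -1 := by
      have ht1 : Tendsto (fun z : ℂ => sig (-z) / sig z) (𝓝[≠] (0:ℂ)) (𝓝 (-1)) := by
        have hnum : Tendsto (fun z : ℂ => sig (-z) / (-z)) (𝓝[≠] (0:ℂ)) (𝓝 1) :=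
          hsig_one.comp neg_tendsto_aux
        have h := hnum.neg.div hsig_one one_ne_zero
        have h' : Tendsto (fun z : ℂ => -(sig (-z) / (-z)) / (sig z / z)) (𝓝[≠] (0:ℂ))
            (𝓝 (-1)) := by simpa [Pi.div_def] using h
        refine h'.congr' ?_
        filter_upwards [self_mem_nhdsWithin, hev0] with z hz hzΛ
        have hz0 : z ≠ 0 := hz
        field_simp
      have ht2 : Tendsto (fun z : ℂ => sig (-z) / sig z) (𝓝[≠] (0:ℂ))
          (𝓝 (sig (-u) / sig u)) := by
        refine Filter.Tendsto.congr' ?_ tendsto_const_nhds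
        filter_upwards [hev0] with z hz
        exact ((hqconst z hz : sig (-z) / sig z = sig (-u) / sig u)).symm
      exact tendsto_nhds_unique ht2 ht1
    have hsig_odd : ∀ z : ℂ, sig (-z) = -sig z := by
      intro z
      by_cases hz : z ∈ Λ
      · rw [(hsig_zero _).mpr (hneg _ hz), (hsig_zero z).mpr hz, neg_zero]
      · have h : sig (-z) / sig z = sig (-u) / sig u := hqconst z hz
        rw [hqm1] at h
        have h2 := (div_eq_iff (hsig_ne z hz)).mp h
        rw [h2]; ring
    -- quasi-periodicity of zeta with period 2u
    have haddC : ∀ z : ℂ, z ∉ Λ → z + 2*u ∉ Λ := by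
      intro z hz h
      apply hz
      have h3 := haddmem _ _ h (hneg _ h2u)
      rwa [show z + 2*u + -(2*u) = z from by ring] at h3
    have hzq : ∀ z ∉ Λ, zet (z + 2*u) = zet z + 2 * zet u := by
      have hderiv : ∀ z ∈ Λᶜ, HasDerivAt (fun y => zet (y + 2*u) - zet y) 0 z := by
        intro z hz
        have h1 : HasDerivAt (fun y : ℂ => zet (y + 2*u)) (-pe (z + 2*u) * 1) z := by
          have := (hzet_deriv _ (haddC z hz)).comp z ((hasDerivAt_id z).add_const (2*u))
          exact this
        have h := h1.sub (hzet_deriv z hz)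
        convert h using 1
        · rfl
        · rfl
        · rfl
        rw [hpe_perΛ (2*u) h2u z]; ring
      have hconst := const_of_deriv_zero_aux hopenC hpreconn hderiv (Set.mem_compl hmu)
      intro z hz
      have h : zet (z + 2*u) - zet z = zet (-u + 2*u) - zet (-u) := hconst z hz
      rw [show -u + 2*u = u from by ring, hzet_odd u hu] at h
      linear_combination h
    -- quasi-periodicity of sigma with period 2u
    have hsq : ∀ z ∉ Λ, sig (z + 2*u) = -(Complex.exp (2 * zet u * (z + u)) * sig z) := by
      have hderiv : ∀ z ∈ Λᶜ, HasDerivAt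
          (fun y => sig (y + 2*u) * Complex.exp (-(2 * zet u * (y + u))) / sig y) 0 z := by
        intro z hz
        have hS : HasDerivAt (fun y : ℂ => sig (y + 2*u)) (zet (z + 2*u) * sig (z + 2*u) * 1) z := by
          have := (hsig_deriv _ (haddC z hz)).comp z ((hasDerivAt_id z).add_const (2*u))
          exact this
        have hin : HasDerivAt (fun y : ℂ => -(2 * zet u * (y + u))) (-(2 * zet u * 1)) z := by
          have := (((hasDerivAt_id z).add_const u).const_mul (2 * zet u)).neg
          exact this
        have hN := hS.mul hin.cexp
        have h := hN.div (hsig_deriv z hz) (hsig_ne z hz)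
        convert h using 1
        · rfl
        · rfl
        · rfl
        rw [hzq z hz, Pi.mul_apply]; ring
      have hconst := const_of_deriv_zero_aux hopenC hpreconn hderiv (Set.mem_compl hmu)
      intro z hz
      have h : sig (z + 2*u) * Complex.exp (-(2 * zet u * (z + u))) / sig z
          = sig (-u + 2*u) * Complex.exp (-(2 * zet u * (-u + u))) / sig (-u) := hconst z hz
      rw [show -u + 2*u = u from by ring, show -u + u = (0:ℂ) from by ring] at h
      rw [mul_zero, neg_zero, Complex.exp_zero, mul_one, hsig_odd u] at h
      rw [div_neg, div_self (hsig_ne u hu)] at h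
      have h2 := (div_eq_iff (hsig_ne z hz)).mp h
      have h3 : sig (z + 2*u) * Complex.exp (-(2 * zet u * (z + u)))
            * Complex.exp (2 * zet u * (z + u))
          = -1 * sig z * Complex.exp (2 * zet u * (z + u)) := by rw [h2]
      rw [mul_assoc, ← Complex.exp_add,
        show -(2 * zet u * (z + u)) + 2 * zet u * (z + u) = (0:ℂ) from by ring,
        Complex.exp_zero, mul_one] at h3
      rw [h3]; ring
    -- conclusion
    intro x hx
    by_cases hxu : x - u ∈ Λ
    · have hux : u + x ∈ Λ := by
        rw [show u + x = (x - u) + 2*u from by ring]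
        exact haddmem _ _ hxu h2u
      have hux' : u - x ∈ Λ := by
        rw [show u - x = -(x - u) from by ring]
        exact hneg _ hxu
      simp only [wK, sub_neg_eq_add]
      rw [(hsig_zero _).mpr hux, (hsig_zero _).mpr hux']
      simp
    · have key : sig (u + x) = Complex.exp (2 * zet u * x) * sig (u - x) := by
        have h1 := hsq (x - u) hxu
        rw [show x - u + 2*u = u + x from by ring, show x - u + u = x from by ring] at h1
        rw [h1, show x - u = -(u - x) from by ring, hsig_odd (u - x)]
        ring
      simp only [wK, sub_neg_eq_add]
      rw [key, hsig_odd x]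
      have he : Complex.exp (2 * zet u * x) * Complex.exp (zet u * -x)
          = Complex.exp (zet u * x) := by
        rw [← Complex.exp_add]; ring_nf
      rw [show Complex.exp (2 * zet u * x) * sig (u - x) * Complex.exp (zet u * -x)
          = sig (u - x) * (Complex.exp (2 * zet u * x) * Complex.exp (zet u * -x)) from by ring,
        he, show sig u * -sig x = -(sig u * sig x) from by ring, div_neg, mul_comm (sig (u - x))]


end
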